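/- Let f : ℝⁿ → ℝⁿ be continuous and consider ẋ = f(x). Suppose: (i) Mₑ ⊆ ℝⁿ is closed and forward invariant; (ii) Mᵢ ⊆ Mₑ is closed, stable relative to Mₑ, and globally attractive relative to Mₑ; (iii) M∘ ⊆ Mᵢ is compact, stable relative to Mᵢ, and globally attractive relative to Mᵢ; (iv) solutions are uniformly globally bounded relative to Mₑ: for every compact K ⊆ Mₑ there exists Δ > 0 such that every solution φ with φ(0) ∈ K satisfies ‖φ(t)‖ < Δ for all t in its domain. Then M∘ is uniformly globally asymptotically stable relative to Mₑ: M∘ is stable relative to Mₑ, and for every compact K ⊆ Mₑ and every ε > 0 there exists T > 0 such that every complete solution φ with φ(0) ∈ K satisfies dist(φ(t), M∘) ≤ ε for all t ≥ T. -/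

import Mathlib

open Metric Filter Topology

/-- `φ : ℝ → ℝⁿ` restricted to `[0, T)` (with `0 < T ≤ ∞`) is a solution of `ẋ = f x`. -/
def IsSolution {d : ℕ} (f : EuclideanSpace ℝ (Fin d) → EuclideanSpace ℝ (Fin d))
    (T : EReal) (φ : ℝ → EuclideanSpace ℝ (Fin d)) : Prop :=
  0 < T ∧ ∀ t : ℝ, 0 ≤ t → (t : EReal) < T →
    HasDerivWithinAt φ (f (φ t)) {s : ℝ | 0 ≤ s ∧ (s : EReal) < T} t

/-- `Y` is forward invariant for `ẋ = f x`. -/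
def FwdInvariant {d : ℕ} (f : EuclideanSpace ℝ (Fin d) → EuclideanSpace ℝ (Fin d))
    (Y : Set (EuclideanSpace ℝ (Fin d))) : Prop :=
  ∀ (T : EReal) (φ : ℝ → EuclideanSpace ℝ (Fin d)), IsSolution f T φ → φ 0 ∈ Y →
    ∀ t : ℝ, 0 ≤ t → (t : EReal) < T → φ t ∈ Y

/-- `X` is stable relative to `Y` for `ẋ = f x`. -/
def StableRelCT {d : ℕ} (f : EuclideanSpace ℝ (Fin d) → EuclideanSpace ℝ (Fin d))
    (Y X : Set (EuclideanSpace ℝ (Fin d))) : Prop :=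
  ∀ ε > (0 : ℝ), ∀ Δ > (0 : ℝ), ∃ δ > (0 : ℝ),
    ∀ (T : EReal) (φ : ℝ → EuclideanSpace ℝ (Fin d)), IsSolution f T φ → φ 0 ∈ Y →
      infDist (φ 0) X < δ → ‖φ 0‖ < Δ →
        ∀ t : ℝ, 0 ≤ t → (t : EReal) < T → infDist (φ t) X < ε

/-- `X` is globally attractive relative to `Y` for `ẋ = f x`. -/
def GloballyAttractiveRelCT {d : ℕ}
    (f : EuclideanSpace ℝ (Fin d) → EuclideanSpace ℝ (Fin d))
    (Y X : Set (EuclideanSpace ℝ (Fin d))) : Prop :=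
  ∀ φ : ℝ → EuclideanSpace ℝ (Fin d), IsSolution f ⊤ φ → φ 0 ∈ Y →
    Tendsto (fun t : ℝ => infDist (φ t) X) atTop (𝓝 0)

open Set

set_option maxHeartbeats 2000000

variable {d : ℕ} {f : EuclideanSpace ℝ (Fin d) → EuclideanSpace ℝ (Fin d)}

/-- solution on a closed interval `[0,L]`. -/
def SolTo {d : ℕ} (f : EuclideanSpace ℝ (Fin d) → EuclideanSpace ℝ (Fin d))
    (L : ℝ) (φ : ℝ → EuclideanSpace ℝ (Fin d)) : Prop :=
  ∀ t ∈ Icc (0:ℝ) L, HasDerivWithinAt φ (f (φ t)) (Icc (0:ℝ) L) t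

lemma solTo_shift {T : EReal} {φ : ℝ → EuclideanSpace ℝ (Fin d)} (h : IsSolution f T φ)
    {s L : ℝ} (hs : 0 ≤ s) (hL : 0 ≤ L) (hT : ((s + L : ℝ) : EReal) < T) :
    SolTo f L (fun u => φ (u + s)) := by
  intro t ht
  have hmap : MapsTo (fun u : ℝ => u + s) (Icc (0:ℝ) L) {u : ℝ | 0 ≤ u ∧ (u : EReal) < T} := by
    intro u hu
    refine ⟨show (0:ℝ) ≤ u + s by linarith [hu.1], lt_of_le_of_lt ?_ hT⟩
    exact_mod_cast (by linarith [hu.2] : u + s ≤ s + L)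
  have hts : (t + s : ℝ) ∈ {u : ℝ | 0 ≤ u ∧ (u : EReal) < T} := hmap ht
  have hd := h.2 (t + s) hts.1 hts.2
  have hid : HasDerivWithinAt (fun u : ℝ => u + s) 1 (Icc (0:ℝ) L) t :=
    ((hasDerivAt_id t).add_const s).hasDerivWithinAt
  have := hd.scomp t hid hmap
  rw [one_smul] at this
  exact this

lemma solTo_of_isSolution {T : EReal} {φ : ℝ → EuclideanSpace ℝ (Fin d)} (h : IsSolution f T φ)
    {L : ℝ} (hL : 0 ≤ L) (hT : (L : EReal) < T) : SolTo f L φ := by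
  have := solTo_shift (f := f) h le_rfl hL (by simpa using hT)
  simpa using this

lemma isSolution_of_solTo {L : ℝ} {ψ : ℝ → EuclideanSpace ℝ (Fin d)} (h : SolTo f L ψ)
    (hL : 0 < L) : IsSolution f (L : EReal) ψ := by
  refine ⟨by exact_mod_cast hL, fun t ht htL => ?_⟩
  have htL' : t < L := by exact_mod_cast htL
  refine (h t ⟨ht, htL'.le⟩).mono ?_
  intro u hu
  exact ⟨hu.1, by exact_mod_cast (show (u:EReal) < L from hu.2).le⟩

lemma isSolution_top_shift {φ : ℝ → EuclideanSpace ℝ (Fin d)} (h : IsSolution f ⊤ φ)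
    {s : ℝ} (hs : 0 ≤ s) : IsSolution f ⊤ (fun u => φ (u + s)) := by
  refine ⟨by norm_num, fun t ht _ => ?_⟩
  have hmap : MapsTo (fun u : ℝ => u + s) {u : ℝ | 0 ≤ u ∧ (u : EReal) < ⊤}
      {u : ℝ | 0 ≤ u ∧ (u : EReal) < ⊤} := by
    intro u hu; exact ⟨show (0:ℝ) ≤ u + s by linarith [hu.1], EReal.coe_lt_top _⟩
  have hd := h.2 (t + s) (by linarith) (EReal.coe_lt_top _)
  have hid : HasDerivWithinAt (fun u : ℝ => u + s) 1 {u : ℝ | 0 ≤ u ∧ (u : EReal) < ⊤} t :=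
    ((hasDerivAt_id t).add_const s).hasDerivWithinAt
  have := hd.scomp t hid hmap
  rw [one_smul] at this
  exact this

lemma SolTo.continuousOn {L : ℝ} {φ : ℝ → EuclideanSpace ℝ (Fin d)} (h : SolTo f L φ) :
    ContinuousOn φ (Icc (0:ℝ) L) := fun t ht => (h t ht).continuousWithinAt

lemma solTo_integral (hf : Continuous f) {L : ℝ} {φ : ℝ → EuclideanSpace ℝ (Fin d)}
    (h : SolTo f L φ) {t : ℝ} (ht : t ∈ Icc (0:ℝ) L) :
    φ t = φ 0 + ∫ s in (0:ℝ)..t, f (φ s) := by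
  have hsub : Icc (0:ℝ) t ⊆ Icc (0:ℝ) L := Icc_subset_Icc le_rfl ht.2
  have hcont : ContinuousOn φ (Icc (0:ℝ) t) := h.continuousOn.mono hsub
  have hint : IntervalIntegrable (fun s => f (φ s)) MeasureTheory.volume 0 t := by
    apply ContinuousOn.intervalIntegrable
    rw [uIcc_of_le ht.1]
    exact hf.comp_continuousOn hcont
  have := intervalIntegral.integral_eq_sub_of_hasDeriv_right_of_le ht.1 hcont
    (f' := fun s => f (φ s)) ?_ hint
  · rw [this]; abel
  · intro x hx
    have hx' : Icc (0:ℝ) L ∈ 𝓝 x := Icc_mem_nhds hx.1 (lt_of_lt_of_le hx.2 ht.2)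
    exact ((h x ⟨hx.1.le, hx.2.le.trans ht.2⟩).hasDerivAt hx').hasDerivWithinAt

lemma solTo_of_integral (hf : Continuous f) {L : ℝ} {ψ : ℝ → EuclideanSpace ℝ (Fin d)}
    (hL : 0 ≤ L) (hcont : ContinuousOn ψ (Icc (0:ℝ) L))
    (hint : ∀ t ∈ Icc (0:ℝ) L, ψ t = ψ 0 + ∫ s in (0:ℝ)..t, f (ψ s)) :
    SolTo f L ψ := by
  -- extend ψ continuously to ℝ by projection onto [0, L]
  set ψ' : ℝ → EuclideanSpace ℝ (Fin d) := fun u => ψ (max 0 (min u L)) with hψ'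
  have hproj : Continuous fun u : ℝ => max 0 (min u L) :=
    continuous_const.max (continuous_id.min continuous_const)
  have hmem : ∀ u : ℝ, max 0 (min u L) ∈ Icc (0:ℝ) L := by
    intro u; constructor
    · exact le_max_left _ _
    · exact max_le hL (min_le_right _ _)
  have hψ'cont : Continuous ψ' := by
    rw [hψ']
    have : Continuous fun u : ℝ => (Icc (0:ℝ) L).restrict ψ ⟨max 0 (min u L), hmem u⟩ := by
      exact (continuousOn_iff_continuous_restrict.1 hcont).comp
        (Continuous.subtype_mk hproj hmem)
    exact this
  have heq : ∀ u ∈ Icc (0:ℝ) L, ψ' u = ψ u := by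
    intro u hu
    simp only [hψ']
    rw [min_eq_left hu.2, max_eq_right hu.1]
  intro t ht
  have hF : HasDerivAt (fun u => ∫ s in (0:ℝ)..u, f (ψ' s)) (f (ψ' t)) t := by
    apply intervalIntegral.integral_hasDerivAt_right
    · exact (hf.comp hψ'cont).intervalIntegrable _ _
    · exact (hf.comp hψ'cont).aestronglyMeasurable.stronglyMeasurableAtFilter
    · exact (hf.comp hψ'cont).continuousAt
  have hFw : HasDerivWithinAt (fun u => ψ 0 + ∫ s in (0:ℝ)..u, f (ψ' s)) (f (ψ' t))
      (Icc (0:ℝ) L) t := (hF.const_add (ψ 0)).hasDerivWithinAt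
  have hcongr : ∀ u ∈ Icc (0:ℝ) L, ψ 0 + (∫ s in (0:ℝ)..u, f (ψ' s)) = ψ u := by
    intro u hu
    rw [hint u hu]
    congr 1
    apply intervalIntegral.integral_congr
    intro s hs
    rw [uIcc_of_le hu.1] at hs
    exact congrArg f (heq s ⟨hs.1, hs.2.trans hu.2⟩)
  have := hFw.congr (fun u hu => (hcongr u hu).symm) ((hcongr t ht).symm)
  rw [heq t ht] at this
  exact this

lemma solTo_lipschitz {L C Δ₁ : ℝ} {φ : ℝ → EuclideanSpace ℝ (Fin d)} (h : SolTo f L φ)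
    (hbd : ∀ t ∈ Icc (0:ℝ) L, ‖φ t‖ ≤ Δ₁)
    (hC : ∀ x ∈ closedBall (0 : EuclideanSpace ℝ (Fin d)) Δ₁, ‖f x‖ ≤ C)
    {s t : ℝ} (hs : s ∈ Icc (0:ℝ) L) (ht : t ∈ Icc (0:ℝ) L) :
    ‖φ t - φ s‖ ≤ C * |t - s| := by
  have := Convex.norm_image_sub_le_of_norm_hasDerivWithin_le
    (f := φ) (f' := fun u => f (φ u)) (fun u hu => h u hu)
    (fun u hu => hC _ (mem_closedBall_zero_iff.2 (hbd u hu))) (convex_Icc 0 L) hs ht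
  simpa [Real.norm_eq_abs] using this

lemma ultra_lim {X : Type*} [TopologicalSpace X] [T2Space X] [Nonempty X]
    (U : Ultrafilter ℕ) {s : Set X} (hs : IsCompact s) {a : ℕ → X}
    (h : ∀ᶠ k in (U : Filter ℕ), a k ∈ s) :
    Tendsto a (U : Filter ℕ) (𝓝 (limUnder (U : Filter ℕ) a)) := by
  obtain ⟨x, -, hx⟩ := hs.ultrafilter_le_nhds (U.map a) (by
    rw [Ultrafilter.coe_map, le_principal_iff]
    exact mem_map.2 h)
  have hx' : Tendsto a (U : Filter ℕ) (𝓝 x) := hx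
  rwa [hx'.limUnder_eq]

lemma lim_sol (hf : Continuous f) (U : Ultrafilter ℕ) (g : ℕ → ℝ → EuclideanSpace ℝ (Fin d))
    {L Δ₁ : ℝ} (hL : 0 ≤ L) (hΔ : 0 < Δ₁)
    (hsol : ∀ᶠ k in (U : Filter ℕ), SolTo f L (g k))
    (hbd : ∀ᶠ k in (U : Filter ℕ), ∀ t ∈ Icc (0:ℝ) L, ‖g k t‖ ≤ Δ₁) :
    SolTo f L (fun t => limUnder (U : Filter ℕ) fun k => g k t) ∧
      ∀ t ∈ Icc (0:ℝ) L,
        Tendsto (fun k => g k t) (U : Filter ℕ)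
            (𝓝 (limUnder (U : Filter ℕ) fun k => g k t)) ∧
          ‖limUnder (U : Filter ℕ) fun k => g k t‖ ≤ Δ₁ := by
  set ψ : ℝ → EuclideanSpace ℝ (Fin d) := fun t => limUnder (U : Filter ℕ) fun k => g k t
    with hψdef
  obtain ⟨C₀, hC₀⟩ :=
    (isCompact_closedBall (0 : EuclideanSpace ℝ (Fin d)) Δ₁).exists_bound_of_continuousOn
      hf.continuousOn
  set C := max C₀ 1 with hCdef
  have hCpos : (0:ℝ) < C := lt_of_lt_of_le one_pos (le_max_right _ _)
  have hC' : ∀ x ∈ closedBall (0 : EuclideanSpace ℝ (Fin d)) Δ₁, ‖f x‖ ≤ C :=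
    fun x hx => (hC₀ x hx).trans (le_max_left _ _)
  have htend : ∀ t ∈ Icc (0:ℝ) L,
      Tendsto (fun k => g k t) (U : Filter ℕ) (𝓝 (ψ t)) := by
    intro t ht
    exact ultra_lim U (isCompact_closedBall (0 : EuclideanSpace ℝ (Fin d)) Δ₁)
      (hbd.mono fun k hk => mem_closedBall_zero_iff.2 (hk t ht))
  have hψbd : ∀ t ∈ Icc (0:ℝ) L, ‖ψ t‖ ≤ Δ₁ := fun t ht =>
    le_of_tendsto (htend t ht).norm (hbd.mono fun k hk => hk t ht)
  have hglip : ∀ᶠ k in (U : Filter ℕ), ∀ s ∈ Icc (0:ℝ) L, ∀ t ∈ Icc (0:ℝ) L,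
      ‖g k t - g k s‖ ≤ C * |t - s| := by
    filter_upwards [hsol, hbd] with k hk hbk
    intro s hs t ht
    exact solTo_lipschitz hk hbk hC' hs ht
  have hψlip : ∀ s ∈ Icc (0:ℝ) L, ∀ t ∈ Icc (0:ℝ) L, ‖ψ t - ψ s‖ ≤ C * |t - s| := by
    intro s hs t ht
    refine le_of_tendsto (((htend t ht).sub (htend s hs)).norm) ?_
    filter_upwards [hglip] with k hk using hk s hs t ht
  have hψcont : ContinuousOn ψ (Icc (0:ℝ) L) := by
    have hlip : LipschitzOnWith (Real.toNNReal C) ψ (Icc (0:ℝ) L) := by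
      rw [lipschitzOnWith_iff_dist_le_mul]
      intro x hx y hy
      rw [dist_eq_norm, Real.coe_toNNReal C hCpos.le]
      calc ‖ψ x - ψ y‖ ≤ C * |x - y| := hψlip y hy x hx
        _ = C * dist x y := by rw [Real.dist_eq]
  -- uniform convergence along the ultrafilter
    exact hlip.continuousOn
  have hunif : ∀ ε > (0:ℝ), ∀ᶠ k in (U : Filter ℕ), ∀ t ∈ Icc (0:ℝ) L,
      ‖g k t - ψ t‖ ≤ ε := by
    intro ε hε
    rcases eq_or_lt_of_le hL with hL0 | hLpos
    · -- L = 0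
      have h0 : (0:ℝ) ∈ Icc (0:ℝ) L := ⟨le_rfl, hL⟩
      have := (htend 0 h0).eventually (Metric.closedBall_mem_nhds (ψ 0) hε)
      filter_upwards [this] with k hk t ht
      have ht0 : t = 0 := le_antisymm (ht.2.trans hL0.symm.le) ht.1
      subst ht0
      simpa [dist_eq_norm] using hk
    · obtain ⟨N, hN⟩ : ∃ N : ℕ, C * L / (N + 1) < ε / 3 := by
        obtain ⟨N, hN⟩ := exists_nat_gt (C * L / (ε / 3))
        refine ⟨N, ?_⟩
        rw [div_lt_iff₀ (by positivity)]
        rw [div_lt_iff₀ (by positivity)] at hN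
        nlinarith
      set p : ℕ → ℝ := fun i => (i : ℝ) * L / (N + 1) with hp
      have hpmem : ∀ i ∈ Finset.range (N + 2), p i ∈ Icc (0:ℝ) L := by
        intro i hi
        have hi' : (i : ℝ) ≤ (N:ℝ) + 1 := by
          have := Finset.mem_range.1 hi
          exact_mod_cast Nat.lt_succ_iff.1 this
        constructor
        · positivity
        · rw [div_le_iff₀ (by positivity)]
          nlinarith
      have hkey : ∀ᶠ k in (U : Filter ℕ), ∀ i ∈ Finset.range (N + 2),
          ‖g k (p i) - ψ (p i)‖ ≤ ε / 3 := by
        rw [Filter.eventually_all_finset]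
        intro i hi
        have := (htend (p i) (hpmem i hi)).eventually
          (Metric.closedBall_mem_nhds (ψ (p i)) (by positivity : (0:ℝ) < ε / 3))
        filter_upwards [this] with k hk
        simpa [dist_eq_norm] using hk
      filter_upwards [hkey, hglip] with k hk hlip
      intro t ht
      set i : ℕ := ⌊t * (N + 1) / L⌋₊ with hi
      have hnn : 0 ≤ t * (N + 1) / L := div_nonneg (mul_nonneg ht.1 (by positivity)) hLpos.le
      have hile : (i : ℝ) ≤ t * (N + 1) / L := Nat.floor_le hnn
      have hilt : t * (N + 1) / L < i + 1 := Nat.lt_floor_add_one _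
      have hiN : i ∈ Finset.range (N + 2) := by
        rw [Finset.mem_range, Nat.lt_succ_iff]
        have h1 : t * (N + 1) / L ≤ (N:ℝ) + 1 := by
          rw [div_le_iff₀ hLpos]
          nlinarith [ht.2]
        have h2 : (i : ℝ) ≤ ((N + 1 : ℕ) : ℝ) := by
          push_cast
          exact hile.trans h1
        exact_mod_cast h2
      have hple : p i ≤ t := by
        rw [hp, div_le_iff₀ (by positivity)]
        calc (i:ℝ) * L ≤ t * (N+1) / L * L := by nlinarith
          _ = t * (N+1) := by field_simp
      have hgap : t - p i ≤ L / (N + 1) := by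
        rw [div_lt_iff₀ (by positivity : (0:ℝ) < L)] at hilt
        show t - (i:ℝ) * L / (N + 1) ≤ L / (N + 1)
        rw [sub_le_iff_le_add, ← add_div, le_div_iff₀ (by positivity : (0:ℝ) < (N:ℝ)+1)]
        nlinarith
      have hpIcc : p i ∈ Icc (0:ℝ) L := ⟨by positivity, hple.trans ht.2⟩
      have hdecomp : g k t - ψ t =
          (g k t - g k (p i)) + (g k (p i) - ψ (p i)) + (ψ (p i) - ψ t) := by abel
      rw [hdecomp]
      have habs : |t - p i| ≤ L / (N + 1) := by
        rw [abs_of_nonneg (by linarith)]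
        exact hgap
      have h1 : ‖g k t - g k (p i)‖ ≤ C * (L / (N+1)) := by
        calc ‖g k t - g k (p i)‖ ≤ C * |t - p i| := hlip (p i) hpIcc t ht
          _ ≤ C * (L / (N+1)) := by nlinarith
      have h2 : ‖g k (p i) - ψ (p i)‖ ≤ ε / 3 := hk i hiN
      have h3 : ‖ψ (p i) - ψ t‖ ≤ C * (L / (N+1)) := by
        have := hψlip t ht (p i) hpIcc
        calc ‖ψ (p i) - ψ t‖ ≤ C * |p i - t| := this
          _ = C * |t - p i| := by rw [abs_sub_comm]
          _ ≤ C * (L / (N+1)) := by nlinarith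
      have hCL : C * (L / (N+1)) < ε / 3 := by
        rw [← mul_div_assoc]
        exact hN
      calc ‖g k t - g k (p i) + (g k (p i) - ψ (p i)) + (ψ (p i) - ψ t)‖
          ≤ ‖g k t - g k (p i)‖ + ‖g k (p i) - ψ (p i)‖ + ‖ψ (p i) - ψ t‖ := norm_add₃_le
        _ ≤ ε := by linarith
  have hgid : ∀ᶠ k in (U : Filter ℕ), ∀ t ∈ Icc (0:ℝ) L,
      g k t = g k 0 + ∫ s in (0:ℝ)..t, f (g k s) :=
    hsol.mono fun k hk t ht => solTo_integral hf hk ht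
  have h0 : (0:ℝ) ∈ Icc (0:ℝ) L := ⟨le_rfl, hL⟩
  have hψid : ∀ t ∈ Icc (0:ℝ) L, ψ t = ψ 0 + ∫ s in (0:ℝ)..t, f (ψ s) := by
    intro t ht
    have hIten : Tendsto (fun k => ∫ s in (0:ℝ)..t, f (g k s)) (U : Filter ℕ)
        (𝓝 (∫ s in (0:ℝ)..t, f (ψ s))) := by
      rw [Metric.tendsto_nhds]
      intro ε' hε'
      have huc := (isCompact_closedBall (0 : EuclideanSpace ℝ (Fin d))
        Δ₁).uniformContinuousOn_of_continuous hf.continuousOn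
      rw [Metric.uniformContinuousOn_iff] at huc
      have hε₂ : (0:ℝ) < ε' / (2 * (L + 1)) := by positivity
      obtain ⟨δ, hδpos, hδ⟩ := huc _ hε₂
      filter_upwards [hunif (δ/2) (half_pos hδpos), hbd, hsol] with k hk hbk hks
      have hIsub : Icc (0:ℝ) t ⊆ Icc (0:ℝ) L := Icc_subset_Icc le_rfl ht.2
      have hint1 : IntervalIntegrable (fun s => f (g k s)) MeasureTheory.volume 0 t := by
        apply ContinuousOn.intervalIntegrable
        rw [uIcc_of_le ht.1]
        exact hf.comp_continuousOn (hks.continuousOn.mono hIsub)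
      have hint2 : IntervalIntegrable (fun s => f (ψ s)) MeasureTheory.volume 0 t := by
        apply ContinuousOn.intervalIntegrable
        rw [uIcc_of_le ht.1]
        exact hf.comp_continuousOn (hψcont.mono hIsub)
      rw [dist_eq_norm, ← intervalIntegral.integral_sub hint1 hint2]
      have hbound : ∀ s ∈ Set.uIoc (0:ℝ) t, ‖f (g k s) - f (ψ s)‖ ≤ ε' / (2 * (L + 1)) := by
        intro s hs
        rw [Set.uIoc_of_le ht.1] at hs
        have hsIcc : s ∈ Icc (0:ℝ) L := ⟨hs.1.le, hs.2.trans ht.2⟩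
        have h1 : g k s ∈ closedBall (0 : EuclideanSpace ℝ (Fin d)) Δ₁ :=
          mem_closedBall_zero_iff.2 (hbk s hsIcc)
        have h2 : ψ s ∈ closedBall (0 : EuclideanSpace ℝ (Fin d)) Δ₁ :=
          mem_closedBall_zero_iff.2 (hψbd s hsIcc)
        have h3 : dist (g k s) (ψ s) < δ := by
          rw [dist_eq_norm]
          exact lt_of_le_of_lt (hk s hsIcc) (by linarith)
        have h4 := hδ _ h1 _ h2 h3
        rw [dist_eq_norm] at h4
        exact h4.le
      calc ‖∫ s in (0:ℝ)..t, (f (g k s) - f (ψ s))‖ ≤ ε' / (2 * (L + 1)) * |t - 0| :=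
          intervalIntegral.norm_integral_le_of_norm_le_const hbound
        _ < ε' := by
          rw [sub_zero, abs_of_nonneg ht.1]
          rw [div_mul_eq_mul_div, div_lt_iff₀ (by positivity)]
          nlinarith [ht.2]
    have h1 := htend t ht
    have h2 : Tendsto (fun k => g k 0 + ∫ s in (0:ℝ)..t, f (g k s)) (U : Filter ℕ)
        (𝓝 (ψ 0 + ∫ s in (0:ℝ)..t, f (ψ s))) := (htend 0 h0).add hIten
    have h3 : Tendsto (fun k => g k t) (U : Filter ℕ)
        (𝓝 (ψ 0 + ∫ s in (0:ℝ)..t, f (ψ s))) :=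
      h2.congr' (hgid.mono fun k hk => (hk t ht).symm)
    exact tendsto_nhds_unique h1 h3
  exact ⟨solTo_of_integral hf hL hψcont hψid, fun t ht => ⟨htend t ht, hψbd t ht⟩⟩

lemma lim_sol_top (hf : Continuous f) (U : Ultrafilter ℕ)
    (g : ℕ → ℝ → EuclideanSpace ℝ (Fin d)) {Δ₁ : ℝ} (hΔ : 0 < Δ₁)
    (hsol : ∀ L : ℝ, 0 ≤ L → ∀ᶠ k in (U : Filter ℕ), SolTo f L (g k))
    (hbd : ∀ L : ℝ, 0 ≤ L → ∀ᶠ k in (U : Filter ℕ), ∀ t ∈ Icc (0:ℝ) L, ‖g k t‖ ≤ Δ₁) :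
    IsSolution f ⊤ (fun t => limUnder (U : Filter ℕ) fun k => g k t) ∧
      ∀ t : ℝ, 0 ≤ t →
        Tendsto (fun k => g k t) (U : Filter ℕ)
            (𝓝 (limUnder (U : Filter ℕ) fun k => g k t)) ∧
          ‖limUnder (U : Filter ℕ) fun k => g k t‖ ≤ Δ₁ := by
  set ψ : ℝ → EuclideanSpace ℝ (Fin d) := fun t => limUnder (U : Filter ℕ) fun k => g k t
    with hψdef
  have key : ∀ L : ℝ, 0 ≤ L → SolTo f L ψ ∧ ∀ t ∈ Icc (0:ℝ) L,
      Tendsto (fun k => g k t) (U : Filter ℕ) (𝓝 (ψ t)) ∧ ‖ψ t‖ ≤ Δ₁ :=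
    fun L hL => lim_sol hf U g hL hΔ (hsol L hL) (hbd L hL)
  constructor
  · refine ⟨by norm_num, fun t ht _ => ?_⟩
    have h1 : SolTo f (t+1) ψ := (key (t+1) (by linarith)).1
    have h2 := h1 t ⟨ht, by linarith⟩
    refine h2.mono_of_mem_nhdsWithin ?_
    rw [mem_nhdsWithin]
    refine ⟨Iio (t+1), isOpen_Iio, by simp, ?_⟩
    intro u hu
    exact ⟨hu.2.1, le_of_lt hu.1⟩
  · intro t ht
    exact (key t ht).2 t ⟨ht, le_rfl⟩

theorem hierarchical_UGAS_ct {d : ℕ}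
    (f : EuclideanSpace ℝ (Fin d) → EuclideanSpace ℝ (Fin d)) (hf : Continuous f)
    (Me Mi Mo : Set (EuclideanSpace ℝ (Fin d)))
    (hMeClosed : IsClosed Me) (hMeInv : FwdInvariant f Me)
    (hMiSub : Mi ⊆ Me) (hMiClosed : IsClosed Mi)
    (hMiStable : StableRelCT f Me Mi) (hMiAttr : GloballyAttractiveRelCT f Me Mi)
    (hMoSub : Mo ⊆ Mi) (hMoCompact : IsCompact Mo)
    (hMoStable : StableRelCT f Mi Mo) (hMoAttr : GloballyAttractiveRelCT f Mi Mo)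
    (hUGB : ∀ K : Set (EuclideanSpace ℝ (Fin d)), IsCompact K → K ⊆ Me →
      ∃ Δ > (0 : ℝ), ∀ (T : EReal) (φ : ℝ → EuclideanSpace ℝ (Fin d)),
        IsSolution f T φ → φ 0 ∈ K → ∀ t : ℝ, 0 ≤ t → (t : EReal) < T → ‖φ t‖ < Δ) :
    StableRelCT f Me Mo ∧
      ∀ K : Set (EuclideanSpace ℝ (Fin d)), IsCompact K → K ⊆ Me →
        ∀ ε > (0 : ℝ), ∃ T' > (0 : ℝ), ∀ φ : ℝ → EuclideanSpace ℝ (Fin d),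
          IsSolution f ⊤ φ → φ 0 ∈ K → ∀ t ≥ T', infDist (φ t) Mo ≤ ε := by
  rcases Set.eq_empty_or_nonempty Mo with hMoE | hMoNe
  · subst hMoE
    constructor
    · intro ε hε Δ hΔ
      exact ⟨1, one_pos, fun T φ _ _ _ _ t _ _ => by simpa [infDist_empty] using hε⟩
    · intro K hK hKMe ε hε
      exact ⟨1, one_pos, fun φ _ _ t _ => by simpa [infDist_empty] using hε.le⟩
  have hMiNe : Mi.Nonempty := hMoNe.mono hMoSub
  obtain ⟨U, hU⟩ := Filter.exists_ultrafilter_le (atTop : Filter ℕ)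
  have hStable : StableRelCT f Me Mo := by
    intro ε hε Δ hΔ
    by_contra hcon
    push_neg at hcon
    have hsk : ∀ k : ℕ, ∃ (T : EReal) (φ : ℝ → EuclideanSpace ℝ (Fin d)) (t : ℝ),
        IsSolution f T φ ∧ φ 0 ∈ Me ∧ infDist (φ 0) Mo < 1/((k:ℝ)+1) ∧ ‖φ 0‖ < Δ ∧
        0 ≤ t ∧ (t : EReal) < T ∧ ε ≤ infDist (φ t) Mo := by
      intro k
      obtain ⟨T, φ, h1, h2, h3, h4, t, h5, h6, h7⟩ := hcon (1/((k:ℝ)+1)) (by positivity)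
      exact ⟨T, φ, t, h1, h2, h3, h4, h5, h6, h7⟩
    choose T φ tt hsol hmem hd0 hnrm ht0 htT hviol using hsk
    obtain ⟨Δ₁, hΔ₁pos, hΔ₁⟩ := hUGB (closedBall 0 Δ ∩ Me)
      ((isCompact_closedBall _ _).inter_right hMeClosed) inter_subset_right
    have hbdk : ∀ k, ∀ u : ℝ, 0 ≤ u → (u : EReal) < T k → ‖φ k u‖ < Δ₁ := fun k =>
      hΔ₁ (T k) (φ k) (hsol k) ⟨mem_closedBall_zero_iff.2 (hnrm k).le, hmem k⟩
    obtain ⟨C₀, hC₀⟩ :=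
      (isCompact_closedBall (0 : EuclideanSpace ℝ (Fin d)) Δ₁).exists_bound_of_continuousOn
        hf.continuousOn
    set C := max C₀ 1 with hCdef
    have hCpos : (0:ℝ) < C := lt_of_lt_of_le one_pos (le_max_right _ _)
    have hC' : ∀ x ∈ closedBall (0 : EuclideanSpace ℝ (Fin d)) Δ₁, ‖f x‖ ≤ C :=
      fun x hx => (hC₀ x hx).trans (le_max_left _ _)
    obtain ⟨δ₂, hδ₂pos, hδ₂⟩ := hMoStable (ε/2) (half_pos hε) (Δ₁ + 1) (by linarith)
    set θ := min δ₂ ε with hθdef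
    have hθpos : 0 < θ := lt_min hδ₂pos hε
    have hθδ₂ : θ ≤ δ₂ := min_le_left _ _
    have hθε : θ ≤ ε := min_le_right _ _
    have hcoe : ∀ k, ∀ u : ℝ, u ≤ tt k → (u : EReal) < T k := fun k u hu =>
      lt_of_le_of_lt (by exact_mod_cast hu) (htT k)
    have hsolk : ∀ k, SolTo f (tt k) (φ k) := fun k =>
      solTo_of_isSolution (hsol k) (ht0 k) (htT k)
    have hbdIcc : ∀ k, ∀ u ∈ Icc (0:ℝ) (tt k), ‖φ k u‖ ≤ Δ₁ := fun k u hu =>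
      (hbdk k u hu.1 (hcoe k u hu.2)).le
    have hlip : ∀ k, ∀ s ∈ Icc (0:ℝ) (tt k), ∀ u ∈ Icc (0:ℝ) (tt k),
        ‖φ k u - φ k s‖ ≤ C * |u - s| := fun k s hs u hu =>
      solTo_lipschitz (hsolk k) (hbdIcc k) hC' hs hu
    set S : ℕ → Set ℝ := fun k => {u | u ∈ Icc (0:ℝ) (tt k) ∧ infDist (φ k u) Mo ≤ θ/2}
      with hSdef
    set ss : ℕ → ℝ := fun k => sSup (S k) with hssdef
    have hsmall : ∀ᶠ k in atTop, infDist (φ k 0) Mo < θ/2 := by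
      have h2 := tendsto_one_div_add_atTop_nhds_zero_nat.eventually_lt_const (half_pos hθpos)
      filter_upwards [h2] with k hk
      exact (hd0 k).trans hk
    have hgood : ∀ᶠ k in atTop, ss k ∈ S k ∧
        ∀ u, ss k < u → u ≤ tt k → θ/2 < infDist (φ k u) Mo := by
      filter_upwards [hsmall] with k hk
      have hcont : ContinuousOn (fun u => infDist (φ k u) Mo) (Icc (0:ℝ) (tt k)) :=
        (continuous_infDist_pt Mo).comp_continuousOn (hsolk k).continuousOn
      have hScl : IsClosed (S k) :=
        hcont.preimage_isClosed_of_isClosed isClosed_Icc isClosed_Iic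
      have hScomp : IsCompact (S k) := isCompact_Icc.of_isClosed_subset hScl (fun u hu => hu.1)
      have hSne : (S k).Nonempty := ⟨0, ⟨⟨le_rfl, ht0 k⟩, hk.le⟩⟩
      have hmem' : ss k ∈ S k := hScomp.sSup_mem hSne
      refine ⟨hmem', fun u hu1 hu2 => ?_⟩
      by_contra hle
      push_neg at hle
      have hin : u ∈ S k := ⟨⟨(hmem'.1.1.trans hu1.le), hu2⟩, hle⟩
      exact absurd (le_csSup hScomp.bddAbove hin) (not_le.2 hu1)
    have hτlow : ∀ᶠ k in atTop, ε / (2*C) ≤ tt k - ss k := by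
      filter_upwards [hgood] with k hk
      obtain ⟨hks, -⟩ := hk
      have h1 : infDist (φ k (tt k)) Mo ≤ infDist (φ k (ss k)) Mo +
          ‖φ k (tt k) - φ k (ss k)‖ := by
        have := infDist_le_infDist_add_dist (x := φ k (tt k)) (y := φ k (ss k)) (s := Mo)
        rwa [dist_eq_norm] at this
      have h2 : ‖φ k (tt k) - φ k (ss k)‖ ≤ C * |tt k - ss k| :=
        hlip k (ss k) hks.1 (tt k) ⟨ht0 k, le_rfl⟩
      have habs : |tt k - ss k| = tt k - ss k := abs_of_nonneg (by linarith [hks.1.2])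
      rw [habs] at h2
      have h3 := hviol k
      have h4 := hks.2
      rw [div_le_iff₀ (by positivity)]
      nlinarith
    have hMiT : ∀ ρ : ℝ, 0 < ρ → ∀ᶠ k in atTop, ∀ u : ℝ, 0 ≤ u → (u : EReal) < T k →
        infDist (φ k u) Mi < ρ := by
      intro ρ hρ
      obtain ⟨δρ, hδρpos, hδρ⟩ := hMiStable ρ hρ Δ hΔ
      have h2 := tendsto_one_div_add_atTop_nhds_zero_nat.eventually_lt_const hδρpos
      filter_upwards [h2] with k hk
      have hmm : infDist (φ k 0) Mi < δρ :=
        ((infDist_le_infDist_of_subset hMoSub hMoNe).trans_lt ((hd0 k).trans hk))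
      exact hδρ (T k) (φ k) (hsol k) (hmem k) hmm (hnrm k)
    set g : ℕ → ℝ → EuclideanSpace ℝ (Fin d) := fun k u => φ k (u + ss k) with hgdef
    by_cases hBex : ∃ B : ℝ, ∀ᶠ k in (U : Filter ℕ), tt k - ss k ≤ B
    · obtain ⟨B, hB⟩ := hBex
      have hτ0pos : 0 < ε / (2*C) := by positivity
      have hτmem : ∀ᶠ k in (U : Filter ℕ), tt k - ss k ∈ Icc (ε/(2*C)) B := by
        filter_upwards [hτlow.filter_mono hU, hB] with k h1 h2 using ⟨h1, h2⟩
      set τ := limUnder (U : Filter ℕ) (fun k => tt k - ss k) with hτdef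
      have hτ : Tendsto (fun k => tt k - ss k) (U : Filter ℕ) (𝓝 τ) :=
        ultra_lim U isCompact_Icc hτmem
      have hττ0 : ε/(2*C) ≤ τ := ge_of_tendsto hτ (hτmem.mono fun k hk => hk.1)
      have hτpos : 0 < τ := lt_of_lt_of_le hτ0pos hττ0
      set η := min (ε / (12*C)) (τ/3) with hηdef
      have hηpos : 0 < η := lt_min (by positivity) (by positivity)
      have hη3 : η ≤ τ/3 := min_le_right _ _
      have hηε : η ≤ ε/(12*C) := min_le_left _ _
      have hCη : C * η ≤ ε/12 := by
        rw [le_div_iff₀ (by positivity : (0:ℝ) < 12*C)] at hηε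
        nlinarith
      set L := τ - η with hLdef
      have hLpos : 0 < L := by
        have : η < τ := lt_of_le_of_lt hη3 (by linarith)
        linarith
      have he1 : ∀ᶠ k in (U : Filter ℕ), L < tt k - ss k :=
        hτ.eventually (eventually_gt_nhds (by linarith))
      have he2 : ∀ᶠ k in (U : Filter ℕ), tt k - ss k < τ + η :=
        hτ.eventually (eventually_lt_nhds (by linarith))
      have hsolg : ∀ᶠ k in (U : Filter ℕ), SolTo f L (g k) := by
        filter_upwards [he1, hgood.filter_mono hU] with k h1 hk
        obtain ⟨hks, -⟩ := hk
        refine solTo_shift (hsol k) hks.1.1 hLpos.le ?_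
        have hlt : ss k + L < tt k := by linarith
        exact lt_trans (by exact_mod_cast hlt) (htT k)
      have hbdg : ∀ᶠ k in (U : Filter ℕ), ∀ u ∈ Icc (0:ℝ) L, ‖g k u‖ ≤ Δ₁ := by
        filter_upwards [he1, hgood.filter_mono hU] with k h1 hk
        obtain ⟨hks, -⟩ := hk
        intro u hu
        have h0u : (0:ℝ) ≤ u + ss k := by linarith [hu.1, hks.1.1]
        have hle : u + ss k ≤ tt k := by linarith [hu.2]
        exact (hbdk k _ h0u (hcoe k _ hle)).le
      obtain ⟨hψsol, hψpt⟩ := lim_sol hf U g hLpos.le hΔ₁pos hsolg hbdg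
      set ψ : ℝ → EuclideanSpace ℝ (Fin d) :=
        fun u => limUnder (U : Filter ℕ) fun k => g k u with hψdef
      have htend0 : Tendsto (fun k => g k 0) (U : Filter ℕ) (𝓝 (ψ 0)) :=
        (hψpt 0 ⟨le_rfl, hLpos.le⟩).1
      have hψ0Mi : ψ 0 ∈ Mi := by
        rw [hMiClosed.mem_iff_infDist_zero hMiNe]
        refine le_antisymm ?_ infDist_nonneg
        refine le_of_forall_pos_le_add fun ρ hρ => ?_
        rw [zero_add]
        have hten := Filter.Tendsto.comp (g := fun x => infDist x Mi)
          ((continuous_infDist_pt Mi).continuousAt (x := ψ 0)) htend0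
        refine le_of_tendsto hten ?_
        filter_upwards [(hMiT ρ hρ).filter_mono hU, hgood.filter_mono hU] with k h1 hk
        obtain ⟨hks, -⟩ := hk
        have h0s : (0:ℝ) ≤ 0 + ss k := by linarith [hks.1.1]
        have hle : (0:ℝ) + ss k ≤ tt k := by linarith [hks.1.2]
        exact (h1 _ h0s (hcoe k _ hle)).le
      have hψ0Mo : infDist (ψ 0) Mo ≤ θ/2 := by
        refine le_of_tendsto (Tendsto.comp (continuous_infDist_pt Mo).continuousAt htend0) ?_
        filter_upwards [hgood.filter_mono hU] with k hk
        obtain ⟨hks, -⟩ := hk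
        show infDist (φ k (0 + ss k)) Mo ≤ θ/2
        rw [zero_add]
        exact hks.2
      set u0 := τ - 2*η with hu0def
      have hu0mem : u0 ∈ Icc (0:ℝ) L := ⟨by linarith, by linarith⟩
      have hstab := hδ₂ (L : EReal) ψ (isSolution_of_solTo hψsol hLpos) hψ0Mi
        (lt_of_le_of_lt hψ0Mo (by linarith))
        (lt_of_le_of_lt (hψpt 0 ⟨le_rfl, hLpos.le⟩).2 (by linarith))
        u0 hu0mem.1 (by exact_mod_cast (show u0 < L by linarith))
      have hlow : 3/4 * ε ≤ infDist (ψ u0) Mo := by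
        refine ge_of_tendsto (Tendsto.comp (continuous_infDist_pt Mo).continuousAt
          (hψpt u0 hu0mem).1) ?_
        filter_upwards [he1, he2, hgood.filter_mono hU] with k h1 h2 hk
        obtain ⟨hks, -⟩ := hk
        have hu0k : u0 + ss k ∈ Icc (0:ℝ) (tt k) := ⟨by linarith [hks.1.1], by linarith⟩
        have hlp := hlip k (u0 + ss k) hu0k (tt k) ⟨ht0 k, le_rfl⟩
        have h3 : infDist (φ k (tt k)) Mo ≤ infDist (φ k (u0 + ss k)) Mo +
            ‖φ k (tt k) - φ k (u0 + ss k)‖ := by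
          have := infDist_le_infDist_add_dist (x := φ k (tt k)) (y := φ k (u0 + ss k)) (s := Mo)
          rwa [dist_eq_norm] at this
        have habs : |tt k - (u0 + ss k)| = tt k - ss k - u0 := by
          rw [abs_of_nonneg (by linarith [hu0k.2])]
          ring
        rw [habs] at hlp
        have h4 := hviol k
        show 3/4 * ε ≤ infDist (φ k (u0 + ss k)) Mo
        nlinarith
      linarith
    · push_neg at hBex
      have hBB : ∀ B : ℝ, ∀ᶠ k in (U : Filter ℕ), B < tt k - ss k := by
        intro B
        exact hBex B
      have hsolg : ∀ L' : ℝ, 0 ≤ L' → ∀ᶠ k in (U : Filter ℕ), SolTo f L' (g k) := by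
        intro L' hL'
        filter_upwards [hBB L', hgood.filter_mono hU] with k h1 hk
        obtain ⟨hks, -⟩ := hk
        refine solTo_shift (hsol k) hks.1.1 hL' ?_
        have hlt : ss k + L' < tt k := by linarith
        exact lt_trans (by exact_mod_cast hlt) (htT k)
      have hbdg : ∀ L' : ℝ, 0 ≤ L' → ∀ᶠ k in (U : Filter ℕ), ∀ u ∈ Icc (0:ℝ) L',
          ‖g k u‖ ≤ Δ₁ := by
        intro L' hL'
        filter_upwards [hBB L', hgood.filter_mono hU] with k h1 hk
        obtain ⟨hks, -⟩ := hk
        intro u hu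
        have h0u : (0:ℝ) ≤ u + ss k := by linarith [hu.1, hks.1.1]
        have hle : u + ss k ≤ tt k := by linarith [hu.2]
        exact (hbdk k _ h0u (hcoe k _ hle)).le
      obtain ⟨hψsol, hψpt⟩ := lim_sol_top hf U g hΔ₁pos hsolg hbdg
      set ψ : ℝ → EuclideanSpace ℝ (Fin d) :=
        fun u => limUnder (U : Filter ℕ) fun k => g k u with hψdef
      have htend0 : Tendsto (fun k => g k 0) (U : Filter ℕ) (𝓝 (ψ 0)) := (hψpt 0 le_rfl).1
      have hψ0Mi : ψ 0 ∈ Mi := by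
        rw [hMiClosed.mem_iff_infDist_zero hMiNe]
        refine le_antisymm ?_ infDist_nonneg
        refine le_of_forall_pos_le_add fun ρ hρ => ?_
        rw [zero_add]
        have hten := Filter.Tendsto.comp (g := fun x => infDist x Mi)
          ((continuous_infDist_pt Mi).continuousAt (x := ψ 0)) htend0
        refine le_of_tendsto hten ?_
        filter_upwards [(hMiT ρ hρ).filter_mono hU, hgood.filter_mono hU] with k h1 hk
        obtain ⟨hks, -⟩ := hk
        have h0s : (0:ℝ) ≤ 0 + ss k := by linarith [hks.1.1]
        have hle : (0:ℝ) + ss k ≤ tt k := by linarith [hks.1.2]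
        exact (h1 _ h0s (hcoe k _ hle)).le
      have hfloor : ∀ u : ℝ, 0 < u → θ/2 ≤ infDist (ψ u) Mo := by
        intro u hu
        refine ge_of_tendsto (Tendsto.comp (continuous_infDist_pt Mo).continuousAt
          (hψpt u hu.le).1) ?_
        filter_upwards [hBB u, hgood.filter_mono hU] with k h1 hk
        obtain ⟨hks, hafter⟩ := hk
        have h2 : θ/2 < infDist (φ k (u + ss k)) Mo :=
          hafter (u + ss k) (by linarith) (by linarith)
        show θ/2 ≤ infDist (φ k (u + ss k)) Mo
        exact h2.le
      have hattr := hMoAttr ψ hψsol hψ0Mi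
      obtain ⟨u, hu1, hu2⟩ := ((eventually_ge_atTop (1:ℝ)).and
        (hattr.eventually_lt_const (half_pos hθpos))).exists
      have := hfloor u (by linarith)
      linarith
  refine ⟨hStable, ?_⟩
  intro K hK hKMe ε hε
  obtain ⟨Δ₁, hΔ₁pos, hΔ₁⟩ := hUGB K hK hKMe
  obtain ⟨δ, hδpos, hδ⟩ := hStable ε hε (Δ₁ + 1) (by linarith)
  have hHit : ∃ T' > (0:ℝ), ∀ φ : ℝ → EuclideanSpace ℝ (Fin d), IsSolution f ⊤ φ → φ 0 ∈ K →
      ∃ t0 : ℝ, 0 ≤ t0 ∧ t0 ≤ T' ∧ infDist (φ t0) Mo < δ := by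
    by_contra hcon
    push_neg at hcon
    have hsk : ∀ k : ℕ, ∃ φ : ℝ → EuclideanSpace ℝ (Fin d), IsSolution f ⊤ φ ∧ φ 0 ∈ K ∧
        ∀ t0 : ℝ, 0 ≤ t0 → t0 ≤ ((k:ℝ)+1) → δ ≤ infDist (φ t0) Mo := by
      intro k
      obtain ⟨φ, h1, h2, h3⟩ := hcon ((k:ℝ)+1) (by positivity)
      exact ⟨φ, h1, h2, fun t0 ht0 ht1 => h3 t0 ht0 ht1⟩
    choose φ hsol hmem hfar using hsk
    have hbdk : ∀ k, ∀ u : ℝ, 0 ≤ u → ‖φ k u‖ < Δ₁ := fun k u hu =>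
      hΔ₁ ⊤ (φ k) (hsol k) (hmem k) u hu (EReal.coe_lt_top u)
    have hsolg : ∀ L : ℝ, 0 ≤ L → ∀ᶠ k in (U : Filter ℕ), SolTo f L (φ k) := fun L hL =>
      Eventually.of_forall fun k => solTo_of_isSolution (hsol k) hL (EReal.coe_lt_top L)
    have hbdg : ∀ L : ℝ, 0 ≤ L → ∀ᶠ k in (U : Filter ℕ), ∀ u ∈ Icc (0:ℝ) L,
        ‖φ k u‖ ≤ Δ₁ := fun L hL =>
      Eventually.of_forall fun k u hu => (hbdk k u hu.1).le
    obtain ⟨hψsol, hψpt⟩ := lim_sol_top hf U φ hΔ₁pos hsolg hbdg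
    set ψ : ℝ → EuclideanSpace ℝ (Fin d) :=
      fun u => limUnder (U : Filter ℕ) fun k => φ k u with hψdef
    have hψ0Me : ψ 0 ∈ Me :=
      hMeClosed.mem_of_tendsto (hψpt 0 le_rfl).1
        (Eventually.of_forall fun k => hKMe (hmem k))
    have hfloor : ∀ u : ℝ, 0 ≤ u → δ ≤ infDist (ψ u) Mo := by
      intro u hu
      refine ge_of_tendsto (Tendsto.comp (continuous_infDist_pt Mo).continuousAt
        (hψpt u hu).1) ?_
      have hev : ∀ᶠ k : ℕ in atTop, u ≤ (k:ℝ) :=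
        tendsto_natCast_atTop_atTop.eventually (eventually_ge_atTop u)
      filter_upwards [hev.filter_mono hU] with k hk
      exact hfar k u hu (by linarith)
    have hψbd : ∀ u : ℝ, 0 ≤ u → ‖ψ u‖ ≤ Δ₁ := fun u hu => (hψpt u hu).2
    have hattr := hMiAttr ψ hψsol hψ0Me
    have hzmem : ∀ᶠ j : ℕ in (U : Filter ℕ),
        ψ (j:ℝ) ∈ closedBall (0 : EuclideanSpace ℝ (Fin d)) Δ₁ :=
      Eventually.of_forall fun j => mem_closedBall_zero_iff.2 (hψbd j (Nat.cast_nonneg j))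
    set z := limUnder (U : Filter ℕ) (fun j : ℕ => ψ (j:ℝ)) with hzdef
    have hztend : Tendsto (fun j : ℕ => ψ (j:ℝ)) (U : Filter ℕ) (𝓝 z) :=
      ultra_lim U (isCompact_closedBall _ _) hzmem
    have hzMi : z ∈ Mi := by
      rw [hMiClosed.mem_iff_infDist_zero hMiNe]
      have h1 := Filter.Tendsto.comp (g := fun x => infDist x Mi)
        ((continuous_infDist_pt Mi).continuousAt (x := z)) hztend
      have h2 : Tendsto (fun j : ℕ => infDist (ψ (j:ℝ)) Mi) atTop (𝓝 0) :=
        hattr.comp tendsto_natCast_atTop_atTop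
      exact tendsto_nhds_unique h1 (h2.mono_left hU)
    set gχ : ℕ → ℝ → EuclideanSpace ℝ (Fin d) := fun j u => ψ (u + (j:ℝ)) with hgχdef
    have hsolχ : ∀ L : ℝ, 0 ≤ L → ∀ᶠ j in (U : Filter ℕ), SolTo f L (gχ j) := fun L hL =>
      Eventually.of_forall fun j =>
        solTo_shift hψsol (Nat.cast_nonneg j) hL (EReal.coe_lt_top _)
    have hbdχ : ∀ L : ℝ, 0 ≤ L → ∀ᶠ j in (U : Filter ℕ), ∀ u ∈ Icc (0:ℝ) L,
        ‖gχ j u‖ ≤ Δ₁ := fun L hL =>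
      Eventually.of_forall fun j u hu => hψbd (u + (j:ℝ)) (add_nonneg hu.1 (Nat.cast_nonneg j))
    obtain ⟨hχsol, hχpt⟩ := lim_sol_top hf U gχ hΔ₁pos hsolχ hbdχ
    set χ : ℝ → EuclideanSpace ℝ (Fin d) :=
      fun u => limUnder (U : Filter ℕ) fun j => gχ j u with hχdef
    have hχ0 : χ 0 = z := by
      have h1 : Tendsto (fun j => gχ j 0) (U : Filter ℕ) (𝓝 (χ 0)) := (hχpt 0 le_rfl).1
      have h2 : Tendsto (fun j => gχ j 0) (U : Filter ℕ) (𝓝 z) := by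
        have heq : (fun j : ℕ => gχ j 0) = fun j : ℕ => ψ (j:ℝ) := by
          funext j
          show ψ (0 + (j:ℝ)) = ψ (j:ℝ)
          rw [zero_add]
        rw [heq]
        exact hztend
      exact tendsto_nhds_unique h1 h2
    have hfloorχ : ∀ u : ℝ, 0 ≤ u → δ ≤ infDist (χ u) Mo := fun u hu =>
      ge_of_tendsto (Tendsto.comp (continuous_infDist_pt Mo).continuousAt (hχpt u hu).1)
        (Eventually.of_forall fun j => hfloor (u + (j:ℝ)) (add_nonneg hu (Nat.cast_nonneg j)))
    have hattrχ := hMoAttr χ hχsol (hχ0 ▸ hzMi)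
    obtain ⟨u, hu1, hu2⟩ := ((eventually_ge_atTop (0:ℝ)).and
      (hattrχ.eventually_lt_const hδpos)).exists
    exact absurd hu2 (not_lt.2 (hfloorχ u hu1))
  obtain ⟨T', hT'pos, hT'⟩ := hHit
  refine ⟨T', hT'pos, fun φ hφ hφ0 t ht => ?_⟩
  obtain ⟨t0, ht0, ht0T, ht0δ⟩ := hT' φ hφ hφ0
  have hshift : IsSolution f ⊤ (fun u => φ (u + t0)) := isSolution_top_shift hφ ht0
  have hmem0 : φ t0 ∈ Me := hMeInv ⊤ φ hφ (hKMe hφ0) t0 ht0 (EReal.coe_lt_top _)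
  have hnrm0 : ‖φ t0‖ < Δ₁ + 1 := by
    have := hΔ₁ ⊤ φ hφ hφ0 t0 ht0 (EReal.coe_lt_top _)
    linarith
  have hfin := hδ ⊤ (fun u => φ (u + t0)) hshift
    (by show φ (0 + t0) ∈ Me; rw [zero_add]; exact hmem0)
    (by show infDist (φ (0 + t0)) Mo < δ; rw [zero_add]; exact ht0δ)
    (by show ‖φ (0 + t0)‖ < Δ₁ + 1; rw [zero_add]; exact hnrm0)
    (t - t0) (by linarith) (EReal.coe_lt_top _)
  have hfin' : infDist (φ (t - t0 + t0)) Mo < ε := hfin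
  rw [show t - t0 + t0 = t by ring] at hfin'
  exact hfin'.le
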